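/- Let W = [[A₁, αB₁₂],[αB₁₂ᵀ, A₂]] be a symmetric 2N×2N matrix, x and y unit principal eigenvectors of A₁ and A₂ respectively, and ξ = α·xᵀB₁₂y. Then λ₁(W) ≥ max(λ₁(A₁), λ₁(A₂)) + (√(((λ₁(A₁)−λ₁(A₂))/2)² + ξ²) − |λ₁(A₁)−λ₁(A₂)|/2). -/

import Mathlib

open Matrix

/-- The largest eigenvalue (spectral supremum) of a real matrix. -/
noncomputable def lam1 {n : Type*} [Fintype n] [DecidableEq n]
    (M : Matrix n n ℝ) : ℝ :=
  sSup (spectrum ℝ M)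

lemma rayleigh_le_lam1 {n : Type*} [Fintype n] [DecidableEq n] [Nonempty n]
    {M : Matrix n n ℝ} (hM : M.IsHermitian) {v : n → ℝ} (hv : v ⬝ᵥ v = 1) :
    v ⬝ᵥ (M *ᵥ v) ≤ lam1 M := by
  classical
  set U : Matrix n n ℝ := (hM.eigenvectorUnitary : Matrix n n ℝ) with hU
  have hUU : U * star U = 1 := (Matrix.mem_unitaryGroup_iff).mp hM.eigenvectorUnitary.2
  have hstar : star U = Uᵀ := by
    rw [Matrix.star_eq_conjTranspose, Matrix.conjTranspose_eq_transpose_of_trivial]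
  set lam : n → ℝ := hM.eigenvalues with hlam
  set w : n → ℝ := Uᵀ *ᵥ v with hw
  have hD : M = U * diagonal lam * Uᵀ := by
    rw [← hstar, hU, hlam]
    simpa using hM.spectral_theorem
  have hform : v ⬝ᵥ (M *ᵥ v) = ∑ i, lam i * (w i)^2 := by
    conv_lhs => rw [hD]
    rw [Matrix.mul_assoc, ← Matrix.mulVec_mulVec, Matrix.dotProduct_mulVec,
      ← Matrix.mulVec_transpose, ← Matrix.mulVec_mulVec, ← hw]
    simp [dotProduct, Matrix.mulVec_diagonal]
    exact Finset.sum_congr rfl fun i _ => by ring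
  have hwnorm : ∑ i, (w i)^2 = 1 := by
    have : w ⬝ᵥ w = 1 := by
      rw [hw, Matrix.dotProduct_mulVec, Matrix.vecMul_transpose, Matrix.mulVec_mulVec]
      rw [show U * Uᵀ = 1 by rw [← hstar]; exact hUU, Matrix.one_mulVec, hv]
    simpa [dotProduct, pow_two] using this
  obtain ⟨i0, hi0⟩ := Finite.exists_max lam
  have hmem : lam i0 ∈ spectrum ℝ M := hM.eigenvalues_mem_spectrum_real i0
  have hbdd : BddAbove (spectrum ℝ M) := (Matrix.finite_real_spectrum (A := M)).bddAbove
  have hle : lam i0 ≤ lam1 M := le_csSup hbdd hmem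
  have : v ⬝ᵥ (M *ᵥ v) ≤ lam i0 := by
    rw [hform]
    calc ∑ i, lam i * (w i)^2 ≤ ∑ i, lam i0 * (w i)^2 := by
          apply Finset.sum_le_sum
          intro i _
          exact mul_le_mul_of_nonneg_right (hi0 i) (sq_nonneg _)
      _ = lam i0 := by rw [← Finset.mul_sum, hwnorm, mul_one]
  linarith

theorem stmt6 {N : ℕ} (hN : 0 < N) (A1 A2 B12 : Matrix (Fin N) (Fin N) ℝ)
    (hA1 : A1.IsSymm) (hA2 : A2.IsSymm) (α : ℝ)
    (x y : Fin N → ℝ) (hx : x ⬝ᵥ x = 1) (hy : y ⬝ᵥ y = 1)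
    (hxe : A1 *ᵥ x = lam1 A1 • x) (hye : A2 *ᵥ y = lam1 A2 • y) :
    max (lam1 A1) (lam1 A2) +
        (Real.sqrt (((lam1 A1 - lam1 A2) / 2) ^ 2 + (α * (x ⬝ᵥ (B12 *ᵥ y))) ^ 2) -
          |lam1 A1 - lam1 A2| / 2) ≤
      lam1 (Matrix.fromBlocks A1 (α • B12) (α • B12ᵀ) A2) := by
  haveI : NeZero N := ⟨hN.ne'⟩
  set a := lam1 A1 with ha
  set b := lam1 A2 with hb
  set ξ := α * (x ⬝ᵥ (B12 *ᵥ y)) with hξ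
  set W := Matrix.fromBlocks A1 (α • B12) (α • B12ᵀ) A2 with hWdef
  have hW : W.IsHermitian := by
    rw [Matrix.IsHermitian, Matrix.conjTranspose_eq_transpose_of_trivial, hWdef,
      Matrix.fromBlocks_transpose]
    rw [Matrix.IsSymm] at hA1 hA2
    simp [hA1, hA2, Matrix.transpose_smul]
  set r := Real.sqrt (((a - b) / 2) ^ 2 + ξ ^ 2) with hr
  have hr0 : 0 ≤ r := Real.sqrt_nonneg _
  have hr2 : r ^ 2 = ((a - b) / 2) ^ 2 + ξ ^ 2 :=
    Real.sq_sqrt (by positivity)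
  set μ := (a + b) / 2 + r with hμ
  have hmax : max a b + (r - |a - b| / 2) = μ := by
    rcases le_total a b with h | h
    · rw [max_eq_right h, abs_of_nonpos (by linarith)]; rw [hμ]; ring
    · rw [max_eq_left h, abs_of_nonneg (by linarith)]; rw [hμ]; ring
  rw [hmax]
  -- key identity: ξ² = (μ - a)(μ - b)
  have hkey : ξ ^ 2 = (μ - a) * (μ - b) := by
    rw [hμ]; nlinarith [hr2]
  -- quadratic form of W at Sum.elim (c•x) (s•y)
  have hxa : x ⬝ᵥ (A1 *ᵥ x) = a := by
    rw [hxe, dotProduct_smul, hx]; simp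
  have hyb : y ⬝ᵥ (A2 *ᵥ y) = b := by
    rw [hye, dotProduct_smul, hy]; simp
  have hcross : y ⬝ᵥ (B12ᵀ *ᵥ x) = x ⬝ᵥ (B12 *ᵥ y) := by
    rw [Matrix.dotProduct_mulVec, Matrix.vecMul_transpose, dotProduct_comm]
  have hquad : ∀ c s : ℝ,
      (Sum.elim (c • x) (s • y)) ⬝ᵥ (W *ᵥ Sum.elim (c • x) (s • y))
        = c^2 * a + 2 * c * s * ξ + s^2 * b := by
    intro c s
    rw [hWdef, Matrix.fromBlocks_mulVec, sumElim_dotProduct_sumElim]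
    simp only [Sum.elim_comp_inl, Sum.elim_comp_inr, Matrix.mulVec_smul,
      Matrix.smul_mulVec, dotProduct_add,
      dotProduct_smul, smul_dotProduct, smul_eq_mul]
    rw [hxa, hyb, hcross, hξ]
    ring
  have hnorm : ∀ c s : ℝ, (Sum.elim (c • x) (s • y)) ⬝ᵥ (Sum.elim (c • x) (s • y))
      = c^2 + s^2 := by
    intro c s
    rw [sumElim_dotProduct_sumElim]
    simp only [dotProduct_smul, smul_dotProduct, smul_eq_mul]
    rw [hx, hy]; ring
  set n2 := ξ^2 + (μ - a)^2 with hn2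
  rcases eq_or_ne n2 0 with h0 | h0
  · -- then ξ = 0 and μ = a ; use v = Sum.elim x 0
    rw [hn2] at h0
    have h00 := (add_eq_zero_iff_of_nonneg (sq_nonneg ξ) (sq_nonneg (μ - a))).mp h0
    have hξ0 : ξ = 0 := sq_eq_zero_iff.mp h00.1
    have hμa : μ = a := sub_eq_zero.mp (sq_eq_zero_iff.mp h00.2)
    have := rayleigh_le_lam1 hW (v := Sum.elim ((1:ℝ) • x) ((0:ℝ) • y))
      (by rw [hnorm]; norm_num)
    rw [hquad] at this
    rw [hμa]
    calc a = 1^2 * a + 2 * 1 * 0 * ξ + 0^2 * b := by ring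
      _ ≤ lam1 W := this
  · have hn2pos : 0 < n2 := by
      rcases lt_or_eq_of_le (by positivity : (0:ℝ) ≤ n2) with h | h
      · exact h
      · exact absurd h.symm h0
    set nn := Real.sqrt n2 with hnn
    have hnnpos : 0 < nn := Real.sqrt_pos.mpr hn2pos
    have hnn2 : nn ^ 2 = n2 := Real.sq_sqrt hn2pos.le
    set c := ξ / nn with hc
    set s := (μ - a) / nn with hs
    have hunit : c^2 + s^2 = 1 := by
      rw [hc, hs]
      field_simp
      rw [hnn2, hn2]
    have := rayleigh_le_lam1 hW (v := Sum.elim (c • x) (s • y))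
      (by rw [hnorm, hunit])
    rw [hquad] at this
    have hQ : c^2 * a + 2 * c * s * ξ + s^2 * b = μ := by
      have h2 : ξ^2 * a + 2 * ξ^2 * (μ - a) + (μ - a)^2 * b = μ * n2 := by
        rw [hn2]; linear_combination (μ - a) * hkey
      have h3 : c^2 * a + 2 * c * s * ξ + s^2 * b
          = (ξ^2 * a + 2 * ξ^2 * (μ - a) + (μ - a)^2 * b) / nn^2 := by
        rw [hc, hs]; ring
      rw [h3, h2, hnn2]
      exact mul_div_cancel_right₀ μ h0
    rw [hQ] at this
    exact this
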